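/- Let R be a commutative ring and Ã ∈ R^{l1×l0}, L̃ ∈ R^{l1'×l0'} matrices. Then (I_{l0} ⊗ L̃)(Ãᵀ ⊗ I_{l0'}) = (Ãᵀ ⊗ I_{l1'})(I_{l1} ⊗ L̃), so right multiplication by Ãᵀ ⊗ I_{l0'} induces a well-defined R-linear map κ : coker(I_{l0} ⊗ L̃) → coker(I_{l1} ⊗ L̃), and Hom_R(coker(Ã), coker(L̃)) is R-linearly isomorphic to the kernel of κ. -/

import Mathlib

open Matrix

section Preamble

variable {R : Type*} [Ring R]

/-- `⟨A⟩`: the left `R`-submodule of row vectors `R^{1×q}` generated by the rows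
of the matrix `A`. -/
def rowSpan {m : Type*} {q : ℕ} (A : Matrix m (Fin q) R) : Submodule R (Fin q → R) :=
  Submodule.span R (Set.range A)

theorem rowSpan_le_iff {m : Type*} {q : ℕ} {A : Matrix m (Fin q) R}
    {N : Submodule R (Fin q → R)} : rowSpan A ≤ N ↔ ∀ i, A i ∈ N := by
  rw [rowSpan, Submodule.span_le]
  exact Set.range_subset_iff

/-- A matrix `φ` with `⟨Aφ⟩ ≤ ⟨B⟩` induces an `R`-linear map
`coker A → coker B`, `x + ⟨A⟩ ↦ xφ + ⟨B⟩`. -/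
def inducedMap {m m' : Type*} {q q' : ℕ} (A : Matrix m (Fin q) R) (B : Matrix m' (Fin q') R)
    (φ : Matrix (Fin q) (Fin q') R) (h : rowSpan (A * φ) ≤ rowSpan B) :
    ((Fin q → R) ⧸ rowSpan A) →ₗ[R] ((Fin q' → R) ⧸ rowSpan B) :=
  Submodule.mapQ _ _ φ.vecMulLinear (by
    rw [rowSpan, Submodule.span_le]
    rintro _ ⟨i, rfl⟩
    have hAi : φ.vecMulLinear (A i) = (A * φ) i := by
      ext j
      simp [Matrix.vecMulLinear_apply, Matrix.mul_apply, Matrix.vecMul, dotProduct]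
    have hmem := h (Submodule.subset_span ⟨i, rfl⟩)
    simp only [SetLike.mem_coe, Submodule.mem_comap, hAi]
    exact hmem)

end Preamble

/-- The row-major vectorization `row(A) ∈ R^{1×mn}` of a matrix `A ∈ R^{m×n}`:
`row(A)_{i·n+j} = A_{ij}` (`0`-indexed). -/
def rowVec {R : Type*} [Ring R] {m n : ℕ} (A : Matrix (Fin m) (Fin n) R) :
    Fin (m * n) → R :=
  fun k => A (finProdFinEquiv.symm k).1 (finProdFinEquiv.symm k).2

/-- The Kronecker product `A ⊗ B := (a_{ij}B)`, reindexed so as to be indexed by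
`Fin (m*p)` and `Fin (n*q)` in the row-major way. -/
def kron {R : Type*} [Ring R] {m n p q : ℕ} (A : Matrix (Fin m) (Fin n) R)
    (B : Matrix (Fin p) (Fin q) R) : Matrix (Fin (m * p)) (Fin (n * q)) R :=
  Matrix.reindex finProdFinEquiv finProdFinEquiv (Matrix.kroneckerMap (· * ·) A B)



section Aux

open Submodule

variable {R : Type*} [CommRing R]

/-- Rows of `M * N` lie in the row span of `N`. -/
theorem rowSpan_mul_le {m : Type*} {k q : ℕ} [Fintype m]
    (M : Matrix m (Fin k) R) (N : Matrix (Fin k) (Fin q) R) :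
    rowSpan (M * N) ≤ rowSpan N := by
  rw [rowSpan_le_iff]
  intro i
  have h : (M * N) i = ∑ t, M i t • N t := by
    ext j
    simp [Matrix.mul_apply, Finset.sum_apply]
  rw [h]
  exact Submodule.sum_mem _ fun t _ =>
    Submodule.smul_mem _ _ (Submodule.subset_span ⟨t, rfl⟩)

theorem kron_mul_kron {m n p q r s : ℕ} (A : Matrix (Fin m) (Fin n) R)
    (B : Matrix (Fin p) (Fin q) R) (C : Matrix (Fin n) (Fin r) R)
    (D : Matrix (Fin q) (Fin s) R) :
    kron A B * kron C D = kron (A * C) (B * D) := by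
  simp only [kron, Matrix.reindex_apply, Matrix.submatrix_mul_equiv,
    Matrix.mul_kronecker_mul]

/-- The row-major reindexing equivalence `R^{nq} ≃ (Fin n → R^q)`. -/
def rEq (n q : ℕ) : (Fin (n * q) → R) ≃ₗ[R] (Fin n → Fin q → R) where
  toFun v i k := v (finProdFinEquiv (i, k))
  invFun f m := f (finProdFinEquiv.symm m).1 (finProdFinEquiv.symm m).2
  map_add' _ _ := rfl
  map_smul' _ _ := rfl
  left_inv v := funext fun m => by
    show v (finProdFinEquiv ((finProdFinEquiv.symm m).1,
      (finProdFinEquiv.symm m).2)) = v m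
    rw [show ((finProdFinEquiv.symm m).1, (finProdFinEquiv.symm m).2)
      = finProdFinEquiv.symm m from rfl, Equiv.apply_symm_apply]
  right_inv f := funext fun i => funext fun k => by
    show f (finProdFinEquiv.symm (finProdFinEquiv (i, k))).1
      (finProdFinEquiv.symm (finProdFinEquiv (i, k))).2 = f i k
    rw [Equiv.symm_apply_apply]

theorem kron_one_apply {n p q : ℕ} (L : Matrix (Fin p) (Fin q) R)
    (m : Fin (n * p)) (i : Fin n) (k : Fin q) :
    kron (1 : Matrix (Fin n) (Fin n) R) L m (finProdFinEquiv (i, k))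
      = (1 : Matrix (Fin n) (Fin n) R) (finProdFinEquiv.symm m).1 i
        * L (finProdFinEquiv.symm m).2 k := by
  simp only [kron, Matrix.reindex_apply, Matrix.submatrix_apply,
    Equiv.symm_apply_apply]
  rfl

theorem rEq_rowSpan_kron (n : ℕ) {p q : ℕ} (L : Matrix (Fin p) (Fin q) R) :
    (rowSpan (kron (1 : Matrix (Fin n) (Fin n) R) L)).map
        ((rEq n q : (Fin (n * q) → R) ≃ₗ[R] (Fin n → Fin q → R)) : (Fin (n * q) → R) →ₗ[R] (Fin n → Fin q → R))
      = Submodule.pi Set.univ (fun _ : Fin n => rowSpan L) := by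
  classical
  apply le_antisymm
  · rw [rowSpan, Submodule.map_span, Submodule.span_le]
    rintro _ ⟨_, ⟨m, rfl⟩, rfl⟩
    intro i _
    have h : (rEq n q (kron (1 : Matrix (Fin n) (Fin n) R) L m)) i
        = (1 : Matrix (Fin n) (Fin n) R) (finProdFinEquiv.symm m).1 i
            • L (finProdFinEquiv.symm m).2 := by
      ext k
      exact kron_one_apply L m i k
    simp only [LinearEquiv.coe_coe]
    rw [h]
    exact Submodule.smul_mem _ _ (Submodule.subset_span ⟨_, rfl⟩)
  · intro f hf
    have hf' : ∀ i, f i ∈ rowSpan L := fun i => hf i trivial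
    have hsum : f = ∑ i, Pi.single i (f i) := (Finset.univ_sum_single f).symm
    rw [hsum]
    refine Submodule.sum_mem _ fun i _ => ?_
    have hmap : Pi.single i (f i)
        ∈ (rowSpan L).map (LinearMap.single R (fun _ : Fin n => Fin q → R) i) :=
      Submodule.mem_map_of_mem (hf' i)
    rw [rowSpan, Submodule.map_span] at hmap
    refine Submodule.span_le.mpr ?_ hmap
    rintro _ ⟨_, ⟨b, rfl⟩, rfl⟩
    refine ⟨kron (1 : Matrix (Fin n) (Fin n) R) L (finProdFinEquiv (i, b)),
      Submodule.subset_span ⟨_, rfl⟩, ?_⟩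
    ext i' k
    simp only [LinearEquiv.coe_coe, LinearMap.coe_single]
    show kron (1 : Matrix (Fin n) (Fin n) R) L (finProdFinEquiv (i, b))
        (finProdFinEquiv (i', k))
      = (Pi.single i (L b) : Fin n → Fin q → R) i' k
    rw [kron_one_apply L (finProdFinEquiv (i, b)) i' k]
    simp only [Equiv.symm_apply_apply]
    by_cases hii : i' = i
    · subst hii; simp [Matrix.one_apply]
    · simp [Matrix.one_apply, Ne.symm hii, Pi.single_apply, hii]

/-- The cokernel of `I_n ⊗ L` is `Fin n → coker L`. -/
noncomputable def cokerPiEquiv (n : ℕ) {p q : ℕ} (L : Matrix (Fin p) (Fin q) R) :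
    ((Fin (n * q) → R) ⧸ rowSpan (kron (1 : Matrix (Fin n) (Fin n) R) L)) ≃ₗ[R]
      (Fin n → ((Fin q → R) ⧸ rowSpan L)) :=
  (Submodule.Quotient.equiv _ _ (rEq n q) (rEq_rowSpan_kron n L)).trans
    (Submodule.quotientPi _)

theorem cokerPiEquiv_mk (n : ℕ) {p q : ℕ} (L : Matrix (Fin p) (Fin q) R)
    (v : Fin (n * q) → R) :
    cokerPiEquiv n L (Submodule.Quotient.mk v)
      = fun i => Submodule.Quotient.mk (fun k => v (finProdFinEquiv (i, k))) :=
  rfl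

/-- The map `(Fin l0 → Q) → (Fin l1 → Q)`, `f ↦ (i ↦ ∑ j, A i j • f j)`. -/
def kapMap {l1 l0 : ℕ} (A : Matrix (Fin l1) (Fin l0) R) (Q : Type*)
    [AddCommGroup Q] [Module R Q] : (Fin l0 → Q) →ₗ[R] (Fin l1 → Q) :=
  LinearMap.pi fun i => ∑ j, A i j • LinearMap.proj j

theorem kapMap_apply {l1 l0 : ℕ} (A : Matrix (Fin l1) (Fin l0) R) (Q : Type*)
    [AddCommGroup Q] [Module R Q] (f : Fin l0 → Q) (i : Fin l1) :
    kapMap A Q f i = ∑ j, A i j • f j := by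
  simp [kapMap, LinearMap.pi_apply, LinearMap.sum_apply]

theorem mk_single_sum {l0 : ℕ} (p : Submodule R (Fin l0 → R)) {Q : Type*}
    [AddCommGroup Q] [Module R Q] (g : ((Fin l0 → R) ⧸ p) →ₗ[R] Q)
    (w : Fin l0 → R) :
    ∑ j, w j • g (Submodule.Quotient.mk (Pi.single j 1))
      = g (Submodule.Quotient.mk w) := by
  classical
  have h1 : ∀ j : Fin l0, w j • g (Submodule.Quotient.mk (Pi.single j (1 : R)))
      = g (Submodule.Quotient.mk (Pi.single j (w j))) := by
    intro j
    have hv : w j • (Pi.single j (1 : R) : Fin l0 → R)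
        = (Pi.single j (w j) : Fin l0 → R) := by
      ext j'
      by_cases hj : j' = j <;> simp [Pi.single_apply, hj]
    rw [← _root_.map_smul, ← Submodule.Quotient.mk_smul, hv]
  calc ∑ j, w j • g (Submodule.Quotient.mk (Pi.single j 1))
      = ∑ j, (g.comp p.mkQ) (Pi.single j (w j)) :=
        Finset.sum_congr rfl fun j _ => h1 j
    _ = (g.comp p.mkQ) (∑ j, Pi.single j (w j)) := (map_sum _ _ _).symm
    _ = g (Submodule.Quotient.mk w) := by rw [Finset.univ_sum_single]; rfl

/-- `Hom(coker A, Q)` is the kernel of `kapMap A Q`. -/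
noncomputable def homEquivKer {l1 l0 : ℕ} (A : Matrix (Fin l1) (Fin l0) R)
    (Q : Type*) [AddCommGroup Q] [Module R Q] :
    ((((Fin l0 → R) ⧸ rowSpan A)) →ₗ[R] Q) ≃ₗ[R] LinearMap.ker (kapMap A Q) where
  toFun g := (⟨fun j => g (Submodule.Quotient.mk (Pi.single j 1)), by
    rw [LinearMap.mem_ker]
    ext i
    rw [kapMap_apply]
    rw [mk_single_sum (rowSpan A) g (A i)]
    have hz : (Submodule.Quotient.mk (A i) : (Fin l0 → R) ⧸ rowSpan A) = 0 :=
      (Submodule.Quotient.mk_eq_zero _).mpr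
        (Submodule.subset_span (Set.mem_range_self i))
    rw [hz, map_zero]
    rfl⟩ : LinearMap.ker (kapMap A Q))
  map_add' g h := rfl
  map_smul' r g := rfl
  invFun f := Submodule.liftQ _ (Fintype.linearCombination R f.1) (by
    rw [rowSpan_le_iff]
    intro i
    rw [LinearMap.mem_ker, Fintype.linearCombination_apply]
    have h2 := congrFun (LinearMap.mem_ker.mp f.2) i
    rw [kapMap_apply] at h2
    simpa using h2)
  left_inv g := by
    apply Submodule.linearMap_qext
    refine LinearMap.ext fun v => ?_
    simp only [LinearMap.comp_apply, Submodule.mkQ_apply, Submodule.liftQ_apply,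
      Fintype.linearCombination_apply]
    exact mk_single_sum (rowSpan A) g v
  right_inv f := by
    apply Subtype.ext
    funext j
    simp only [Submodule.liftQ_apply, Fintype.linearCombination_apply]
    rw [Finset.sum_eq_single j]
    · simp
    · intro j' _ hj'; simp [Pi.single_apply, hj']
    · intro hj; exact absurd (Finset.mem_univ j) hj

end Aux

/-- `(I_{l0} ⊗ L̃)(Ãᵀ ⊗ I_{l0'}) = (Ãᵀ ⊗ I_{l1'})(I_{l1} ⊗ L̃)`, so right
multiplication by `Ãᵀ ⊗ I_{l0'}` induces a map `κ : coker(I_{l0} ⊗ L̃) → coker(I_{l1} ⊗ L̃)`,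
and `Hom_R(coker Ã, coker L̃)` is isomorphic to the kernel of `κ`. -/
theorem statement_13 {R : Type*} [CommRing R] {l1 l0 l1' l0' : ℕ}
    (A : Matrix (Fin l1) (Fin l0) R) (L : Matrix (Fin l1') (Fin l0') R) :
    (kron (1 : Matrix (Fin l0) (Fin l0) R) L * kron Aᵀ (1 : Matrix (Fin l0') (Fin l0') R)
      = kron Aᵀ (1 : Matrix (Fin l1') (Fin l1') R) * kron (1 : Matrix (Fin l1) (Fin l1) R) L) ∧
    ∃ h : rowSpan (kron (1 : Matrix (Fin l0) (Fin l0) R) L *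
          kron Aᵀ (1 : Matrix (Fin l0') (Fin l0') R))
        ≤ rowSpan (kron (1 : Matrix (Fin l1) (Fin l1) R) L),
      Nonempty (((((Fin l0 → R) ⧸ rowSpan A)) →ₗ[R] ((Fin l0' → R) ⧸ rowSpan L)) ≃ₗ[R]
        LinearMap.ker (inducedMap (kron (1 : Matrix (Fin l0) (Fin l0) R) L)
          (kron (1 : Matrix (Fin l1) (Fin l1) R) L)
          (kron Aᵀ (1 : Matrix (Fin l0') (Fin l0') R)) h)) := by
  classical
  have heq : kron (1 : Matrix (Fin l0) (Fin l0) R) L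
        * kron Aᵀ (1 : Matrix (Fin l0') (Fin l0') R)
      = kron Aᵀ (1 : Matrix (Fin l1') (Fin l1') R)
        * kron (1 : Matrix (Fin l1) (Fin l1) R) L := by
    rw [kron_mul_kron, kron_mul_kron, Matrix.one_mul, Matrix.mul_one,
      Matrix.one_mul, Matrix.mul_one]
  have h : rowSpan (kron (1 : Matrix (Fin l0) (Fin l0) R) L *
        kron Aᵀ (1 : Matrix (Fin l0') (Fin l0') R))
      ≤ rowSpan (kron (1 : Matrix (Fin l1) (Fin l1) R) L) := by
    rw [heq]
    exact rowSpan_mul_le _ _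
  refine ⟨heq, h, ?_⟩
  set QL := ((Fin l0' → R) ⧸ rowSpan L)
  set κ := inducedMap (kron (1 : Matrix (Fin l0) (Fin l0) R) L)
    (kron (1 : Matrix (Fin l1) (Fin l1) R) L)
    (kron Aᵀ (1 : Matrix (Fin l0') (Fin l0') R)) h with hκdef
  set E0 := cokerPiEquiv l0 L
  set E1 := cokerPiEquiv l1 L
  set K := kapMap A QL with hKdef
  have hconj : ∀ x, E1 (κ x) = K (E0 x) := by
    intro x
    obtain ⟨v, rfl⟩ := Submodule.Quotient.mk_surjective _ x
    have hκv : κ (Submodule.Quotient.mk v)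
        = Submodule.Quotient.mk
            (Matrix.vecMul v (kron Aᵀ (1 : Matrix (Fin l0') (Fin l0') R))) := rfl
    rw [hκv, cokerPiEquiv_mk, cokerPiEquiv_mk]
    funext i
    rw [hKdef, kapMap_apply]
    have key : ∀ k : Fin l0',
        Matrix.vecMul v (kron Aᵀ (1 : Matrix (Fin l0') (Fin l0') R))
            (finProdFinEquiv (i, k))
          = ∑ j, A i j * v (finProdFinEquiv (j, k)) := by
      intro k
      simp only [Matrix.vecMul, dotProduct]
      rw [← Equiv.sum_comp finProdFinEquiv
        (fun m => v m * kron Aᵀ (1 : Matrix (Fin l0') (Fin l0') R) m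
          (finProdFinEquiv (i, k)))]
      rw [Fintype.sum_prod_type]
      have hk : ∀ (j : Fin l0) (l : Fin l0'),
          kron Aᵀ (1 : Matrix (Fin l0') (Fin l0') R) (finProdFinEquiv (j, l))
              (finProdFinEquiv (i, k))
            = A i j * (if l = k then (1 : R) else 0) := by
        intro j l
        simp [kron, Matrix.one_apply, Matrix.transpose_apply]
      simp only [hk]
      simp only [mul_ite, mul_one, mul_zero, Finset.sum_ite_eq',
        Finset.mem_univ, if_true]
      exact Finset.sum_congr rfl fun j _ => mul_comm _ _
    have hcomm : (fun k => Matrix.vecMul v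
          (kron Aᵀ (1 : Matrix (Fin l0') (Fin l0') R)) (finProdFinEquiv (i, k)))
        = ∑ j, A i j • (fun k => v (finProdFinEquiv (j, k))) := by
      funext k
      rw [key k]
      simp [Finset.sum_apply]
    calc (Submodule.Quotient.mk (fun k => Matrix.vecMul v
            (kron Aᵀ (1 : Matrix (Fin l0') (Fin l0') R)) (finProdFinEquiv (i, k))) : QL)
        = Submodule.Quotient.mk (∑ j, A i j • (fun k => v (finProdFinEquiv (j, k)))) := by
          rw [hcomm]
      _ = ∑ j, A i j • (Submodule.Quotient.mk (fun k => v (finProdFinEquiv (j, k))) : QL) := by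
          simp only [← Submodule.mkQ_apply, _root_.map_sum, _root_.map_smul]
  have h1 : LinearMap.ker κ
      = Submodule.comap (E0 : _ →ₗ[R] _) (LinearMap.ker K) := by
    ext x
    simp only [LinearMap.mem_ker, Submodule.mem_comap, LinearEquiv.coe_coe]
    rw [← hconj x]
    constructor
    · intro hx; rw [hx, map_zero]
    · intro hx
      have := congrArg E1.symm hx
      simpa using this
  have hker : (LinearMap.ker κ).map (E0 : _ →ₗ[R] _) = LinearMap.ker K := by
    rw [h1]
    exact Submodule.map_comap_eq_of_surjective
      (f := (E0 : _ →ₗ[R] _)) (by exact E0.surjective) _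
  exact ⟨(homEquivKer A QL).trans
    (LinearEquiv.ofSubmodules E0 (LinearMap.ker κ) (LinearMap.ker K) hker).symm⟩
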